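/- For every integer t ≥ 1, the shallow vortex grid H_t is a minor of the segregated shallow vortex grid of order 2t. -/

import Mathlib

/-- `H` is a minor of `G`: there is a family of pairwise disjoint branch sets in `G`,
each inducing a connected subgraph, such that every edge of `H` is realized between
the corresponding branch sets. -/
def IsMinorOf {V W : Type*} (H : SimpleGraph V) (G : SimpleGraph W) : Prop :=
  ∃ X : V → Set W,
    (∀ v : V, (G.induce (X v)).Connected) ∧
    (∀ u v : V, u ≠ v → Disjoint (X u) (X v)) ∧
    (∀ u v : V, H.Adj u v → ∃ a ∈ X u, ∃ b ∈ X v, G.Adj a b)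

/-- The shallow vortex grid `H_k`: `k` concentric cycles of length `2k`,
vertical edges between consecutive cycles, and chords `j ↦ j+2` on the first cycle. -/
def shallowVortexGrid (k : ℕ) : SimpleGraph (Fin k × ZMod (2 * k)) :=
  SimpleGraph.fromRel fun p q =>
    (p.1 = q.1 ∧ q.2 = p.2 + 1) ∨
    (p.2 = q.2 ∧ (q.1 : ℕ) = (p.1 : ℕ) + 1) ∨
    ((p.1 : ℕ) = 0 ∧ (q.1 : ℕ) = 0 ∧ q.2 = p.2 + 2)

/-- The segregated shallow vortex grid of order `k`: `k` concentric cycles of length `4k`,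
vertical edges between consecutive cycles, and for every `m < k` the crossing chords
`4m ↦ 4m+2` and `4m+1 ↦ 4m+3` on the first cycle. -/
def segShallowVortexGrid (k : ℕ) : SimpleGraph (Fin k × ZMod (4 * k)) :=
  SimpleGraph.fromRel fun p q =>
    (p.1 = q.1 ∧ q.2 = p.2 + 1) ∨
    (p.2 = q.2 ∧ (q.1 : ℕ) = (p.1 : ℕ) + 1) ∨
    ((p.1 : ℕ) = 0 ∧ (q.1 : ℕ) = 0 ∧ ∃ m : ℕ, m < k ∧
      ((p.2 = ((4 * m : ℕ) : ZMod (4 * k)) ∧ q.2 = ((4 * m + 2 : ℕ) : ZMod (4 * k))) ∨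
       (p.2 = ((4 * m + 1 : ℕ) : ZMod (4 * k)) ∧ q.2 = ((4 * m + 3 : ℕ) : ZMod (4 * k)))))

namespace SVGAux

/-- A set covered by a chain of successively adjacent vertices induces a
connected subgraph. -/
lemma chain_conn {W : Type*} (G : SimpleGraph W) (S : Set W) (f : ℕ → W) (n : ℕ)
    (hmem : ∀ k, k ≤ n → f k ∈ S)
    (hcov : ∀ w ∈ S, ∃ k, k ≤ n ∧ f k = w)
    (hadj : ∀ k, k < n → G.Adj (f k) (f (k+1))) :
    (G.induce S).Connected := by
  have hne : Nonempty ↑S := ⟨f 0, hmem 0 (Nat.zero_le _)⟩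
  refine ⟨fun a b => ?_⟩
  have key : ∀ k (hk : k ≤ n),
      (G.induce S).Reachable ⟨f 0, hmem 0 (Nat.zero_le _)⟩ ⟨f k, hmem k hk⟩ := by
    intro k
    induction k with
    | zero => intro _; exact SimpleGraph.Reachable.refl _
    | succ m ih =>
      intro hk
      have hm : m ≤ n := by omega
      have hlt : m < n := by omega
      have step : (G.induce S).Adj ⟨f m, hmem m hm⟩ ⟨f (m+1), hmem (m+1) hk⟩ :=
        hadj m hlt
      exact (ih hm).trans step.reachable
  obtain ⟨ka, hka, hfa⟩ := hcov a.1 a.2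
  obtain ⟨kb, hkb, hfb⟩ := hcov b.1 b.2
  have ha : (⟨f ka, hmem ka hka⟩ : ↑S) = a := Subtype.ext hfa
  have hb : (⟨f kb, hmem kb hkb⟩ : ↑S) = b := Subtype.ext hfb
  rw [← ha, ← hb]
  exact (key ka hka).symm.trans (key kb hkb)

variable (t : ℕ)

/-- Column `4j + a` of the host graph. -/
def col (j : ZMod (2*t)) (a : ℤ) : ZMod (4*(2*t)) :=
  ((4 * (j.val : ℤ) + a : ℤ) : ZMod (4*(2*t)))

/-- Parity of an element of `ZMod (2t)`. -/
def pa : ZMod (2*t) →+* ZMod 2 := ZMod.castHom (dvd_mul_right 2 t) (ZMod 2)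

lemma col_add_one (j : ZMod (2*t)) (a : ℤ) : col t j (a+1) = col t j a + 1 := by
  unfold col; push_cast; ring

lemma col_succ (ht : 1 ≤ t) (j : ZMod (2*t)) (a : ℤ) : col t (j+1) a = col t j (a+4) := by
  haveI : NeZero (2*t) := ⟨by omega⟩
  haveI : Fact (1 < 2*t) := ⟨by omega⟩
  unfold col
  rw [ZMod.intCast_eq_intCast_iff]
  rw [Int.modEq_iff_dvd]
  have h1 : (j+1).val = (j.val + 1) % (2*t) := by rw [ZMod.val_add, ZMod.val_one]
  have h2 := Nat.mod_add_div (j.val + 1) (2*t)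
  set q := (j.val + 1) / (2*t) with hq
  have h3n : (j+1).val + 2*t*q = j.val + 1 := by rw [h1]; exact h2
  have h3 : ((j+1).val : ℤ) + 2*(t:ℤ)*(q:ℤ) = (j.val:ℤ) + 1 := by exact_mod_cast h3n
  refine ⟨(q:ℤ), ?_⟩
  push_cast
  linear_combination -4 * h3

lemma col_inj (ht : 1 ≤ t) {j j' : ZMod (2*t)} {a a' : ℤ} (h : col t j a = col t j' a') :
    ∃ e : ℤ, a' - a = 4 * e ∧ j = j' + (e : ZMod (2*t)) ∧ pa t j = pa t j' + (e : ZMod 2) := by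
  haveI : NeZero (2*t) := ⟨by omega⟩
  unfold col at h
  rw [ZMod.intCast_eq_intCast_iff] at h
  obtain ⟨k, hk⟩ := h.dvd
  set e : ℤ := (j.val : ℤ) - (j'.val : ℤ) + 2*t*k with he
  have hj : j = j' + (e : ZMod (2*t)) := by
    have : ((e : ℤ) : ZMod (2*t)) = j - j' := by
      rw [he]
      push_cast
      rw [ZMod.natCast_val, ZMod.natCast_val, ZMod.cast_id, ZMod.cast_id]
      have h0 : ((2*t : ℕ) : ZMod (2*t)) = 0 := ZMod.natCast_self _
      push_cast at h0
      rw [h0]; ring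
    rw [this]; ring
  refine ⟨e, by rw [he]; push_cast at hk ⊢; linear_combination hk, hj, ?_⟩
  rw [hj, map_add, map_intCast]

lemma col_ne (ht : 1 ≤ t) {j j' : ZMod (2*t)} {a a' : ℤ} (hd : ¬ ((4:ℤ) ∣ (a' - a))) :
    col t j a ≠ col t j' a' := by
  intro h
  obtain ⟨e, he, -, -⟩ := col_inj t ht h
  exact hd ⟨e, he⟩

lemma natCast_eq_col (j : ZMod (2*t)) (b : ℕ) (a : ℤ)
    (h : ((4*(2*t) : ℕ) : ℤ) ∣ (4*(j.val:ℤ) + a - (b:ℤ))) :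
    ((b : ℕ) : ZMod (4*(2*t))) = col t j a := by
  have h1 : ((b : ℕ) : ZMod (4*(2*t))) = (((b:ℕ) : ℤ) : ZMod (4*(2*t))) := by push_cast; rfl
  rw [h1, col, ZMod.intCast_eq_intCast_iff]
  exact Int.modEq_iff_dvd.mpr h

lemma adj_step (ht : 1 ≤ t) (r : Fin (2*t)) (x : ZMod (4*(2*t))) :
    (segShallowVortexGrid (2*t)).Adj (r, x) (r, x+1) := by
  haveI : Fact (1 < 4*(2*t)) := ⟨by omega⟩
  rw [segShallowVortexGrid, SimpleGraph.fromRel_adj]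
  refine ⟨?_, Or.inl (Or.inl ⟨rfl, rfl⟩)⟩
  intro h
  have := (Prod.ext_iff.mp h).2
  simp only at this
  exact one_ne_zero (left_eq_add.mp this)

lemma adj_colstep (ht : 1 ≤ t) (r : Fin (2*t)) (j : ZMod (2*t)) (a b : ℤ) (h : b = a + 1) :
    (segShallowVortexGrid (2*t)).Adj (r, col t j a) (r, col t j b) := by
  subst h
  rw [col_add_one]
  exact adj_step t ht r _

lemma adj_vert (r r' : Fin (2*t)) (h : (r' : ℕ) = (r : ℕ) + 1) (x : ZMod (4*(2*t))) :
    (segShallowVortexGrid (2*t)).Adj (r, x) (r', x) := by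
  rw [segShallowVortexGrid, SimpleGraph.fromRel_adj]
  refine ⟨?_, Or.inl (Or.inr (Or.inl ⟨rfl, h⟩))⟩
  intro hc
  have h2 : r = r' := congrArg Prod.fst hc
  rw [h2] at h; omega

/-- chord `(4m+1, 4m+3)` realizing the pair `col j (-3), col j (-1)`. -/
lemma adj_chord31 (ht : 1 ≤ t) (j : ZMod (2*t)) (r r' : Fin (2*t))
    (hr : (r : ℕ) = 0) (hr' : (r' : ℕ) = 0) :
    (segShallowVortexGrid (2*t)).Adj (r, col t j (-3)) (r', col t j (-1)) := by
  haveI : NeZero (2*t) := ⟨by omega⟩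
  set m := (j.val + (2*t - 1)) % (2*t) with hm
  have hmlt : m < 2*t := Nat.mod_lt _ (by omega)
  have h2 : m + 2*t*((j.val + (2*t-1)) / (2*t)) = j.val + (2*t-1) :=
    Nat.mod_add_div _ _
  set q := (j.val + (2*t-1)) / (2*t) with hqdef
  have hq : (m:ℤ) + 2*(t:ℤ)*(q:ℤ) = (j.val:ℤ) + (((2*t-1 : ℕ)):ℤ) := by exact_mod_cast h2
  have hq2 : (((2*t-1 : ℕ)):ℤ) = 2*(t:ℤ) - 1 := by omega
  rw [hq2] at hq
  have e1 : ((4*m+1 : ℕ) : ZMod (4*(2*t))) = col t j (-3) := by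
    refine natCast_eq_col t j _ _ ⟨(q:ℤ) - 1, ?_⟩
    push_cast
    linear_combination -4 * hq
  have e2 : ((4*m+3 : ℕ) : ZMod (4*(2*t))) = col t j (-1) := by
    refine natCast_eq_col t j _ _ ⟨(q:ℤ) - 1, ?_⟩
    push_cast
    linear_combination -4 * hq
  rw [segShallowVortexGrid, SimpleGraph.fromRel_adj]
  constructor
  · intro hc
    have : col t j (-3) = col t j (-1) := congrArg Prod.snd hc
    exact col_ne t ht (by omega) this
  · exact Or.inl (Or.inr (Or.inr ⟨hr, hr', m, hmlt, Or.inr ⟨e1.symm, e2.symm⟩⟩))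

/-- chord `(4m, 4m+2)` realizing the pair `col j (-8), col j (-6)`. -/
lemma adj_chord86 (ht : 1 ≤ t) (j : ZMod (2*t)) (r r' : Fin (2*t))
    (hr : (r : ℕ) = 0) (hr' : (r' : ℕ) = 0) :
    (segShallowVortexGrid (2*t)).Adj (r, col t j (-8)) (r', col t j (-6)) := by
  haveI : NeZero (2*t) := ⟨by omega⟩
  set m := (j.val + (2*t - 2)) % (2*t) with hm
  have hmlt : m < 2*t := Nat.mod_lt _ (by omega)
  have h2 : m + 2*t*((j.val + (2*t-2)) / (2*t)) = j.val + (2*t-2) :=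
    Nat.mod_add_div _ _
  set q := (j.val + (2*t-2)) / (2*t) with hqdef
  have hq : (m:ℤ) + 2*(t:ℤ)*(q:ℤ) = (j.val:ℤ) + (((2*t-2 : ℕ)):ℤ) := by exact_mod_cast h2
  have hq2 : (((2*t-2 : ℕ)):ℤ) = 2*(t:ℤ) - 2 := by omega
  rw [hq2] at hq
  have e1 : ((4*m : ℕ) : ZMod (4*(2*t))) = col t j (-8) := by
    refine natCast_eq_col t j _ _ ⟨(q:ℤ) - 1, ?_⟩
    push_cast
    linear_combination -4 * hq
  have e2 : ((4*m+2 : ℕ) : ZMod (4*(2*t))) = col t j (-6) := by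
    refine natCast_eq_col t j _ _ ⟨(q:ℤ) - 1, ?_⟩
    push_cast
    linear_combination -4 * hq
  rw [segShallowVortexGrid, SimpleGraph.fromRel_adj]
  constructor
  · intro hc
    have : col t j (-8) = col t j (-6) := congrArg Prod.snd hc
    exact col_ne t ht (by omega) this
  · exact Or.inl (Or.inr (Or.inr ⟨hr, hr', m, hmlt, Or.inl ⟨e1.symm, e2.symm⟩⟩))

/-- chord `(4m, 4m+2)` with `m = j.val`, realizing the pair `col j 0, col j 2`. -/
lemma adj_chord02 (ht : 1 ≤ t) (j : ZMod (2*t)) (r r' : Fin (2*t))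
    (hr : (r : ℕ) = 0) (hr' : (r' : ℕ) = 0) :
    (segShallowVortexGrid (2*t)).Adj (r, col t j 0) (r', col t j 2) := by
  haveI : NeZero (2*t) := ⟨by omega⟩
  have hmlt : j.val < 2*t := ZMod.val_lt j
  have e1 : ((4*j.val : ℕ) : ZMod (4*(2*t))) = col t j 0 := by
    refine natCast_eq_col t j _ _ ⟨0, ?_⟩
    push_cast
    ring
  have e2 : ((4*j.val+2 : ℕ) : ZMod (4*(2*t))) = col t j 2 := by
    refine natCast_eq_col t j _ _ ⟨0, ?_⟩
    push_cast
    ring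
  rw [segShallowVortexGrid, SimpleGraph.fromRel_adj]
  constructor
  · intro hc
    have : col t j 0 = col t j 2 := congrArg Prod.snd hc
    exact col_ne t ht (by omega) this
  · exact Or.inl (Or.inr (Or.inr ⟨hr, hr', j.val, hmlt, Or.inl ⟨e1.symm, e2.symm⟩⟩))

def gr (ht : 1 ≤ t) (r : ℕ) : Fin (2*t) := ⟨r % (2*t), Nat.mod_lt _ (by omega)⟩

lemma gr_val (ht : 1 ≤ t) {r : ℕ} (h : r < 2*t) : ((gr t ht r : Fin (2*t)) : ℕ) = r :=
  Nat.mod_eq_of_lt h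

def r1 (j : ZMod (2*t)) : Set (ZMod (4*(2*t))) :=
  {col t j (-6), col t j (-5), col t j (-4), col t j (-3)}

def r0 (j : ZMod (2*t)) : Set (ZMod (4*(2*t))) :=
  if pa t j = 0 then {col t j (-6), col t j (-3), col t j (-1), col t j 0}
  else {col t j (-9), col t j (-8), col t j (-6), col t j (-3)}

def X (v : Fin t × ZMod (2*t)) : Set (Fin (2*t) × ZMod (4*(2*t))) :=
  if (v.1 : ℕ) = 0 then
    {p | ((p.1 : ℕ) = 0 ∧ p.2 ∈ r0 t v.2) ∨ ((p.1 : ℕ) = 1 ∧ p.2 ∈ r1 t v.2)}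
  else {p | (p.1 : ℕ) = (v.1 : ℕ) + 1 ∧ p.2 ∈ r1 t v.2}

lemma X_zero {i : Fin t} (hi : (i : ℕ) = 0) (j : ZMod (2*t)) :
    X t (i, j) = {p | ((p.1 : ℕ) = 0 ∧ p.2 ∈ r0 t j) ∨ ((p.1 : ℕ) = 1 ∧ p.2 ∈ r1 t j)} := by
  rw [X, if_pos hi]

lemma X_pos {i : Fin t} (hi : ¬ (i : ℕ) = 0) (j : ZMod (2*t)) :
    X t (i, j) = {p | (p.1 : ℕ) = (i : ℕ) + 1 ∧ p.2 ∈ r1 t j} := by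
  rw [X, if_neg hi]

lemma mem_r1_elim {j : ZMod (2*t)} {x : ZMod (4*(2*t))} (h : x ∈ r1 t j) :
    ∃ a : ℤ, x = col t j a ∧ (a = -6 ∨ a = -5 ∨ a = -4 ∨ a = -3) := by
  rcases h with h | h | h | h
  · exact ⟨-6, h, by norm_num⟩
  · exact ⟨-5, h, by norm_num⟩
  · exact ⟨-4, h, by norm_num⟩
  · exact ⟨-3, h, by norm_num⟩

lemma mem_r0_elim {j : ZMod (2*t)} {x : ZMod (4*(2*t))} (h : x ∈ r0 t j) :
    ∃ a : ℤ, x = col t j a ∧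
      ((pa t j = 0 ∧ (a = -6 ∨ a = -3 ∨ a = -1 ∨ a = 0)) ∨
       (¬ pa t j = 0 ∧ (a = -9 ∨ a = -8 ∨ a = -6 ∨ a = -3))) := by
  rw [r0] at h
  by_cases hp : pa t j = 0
  · rw [if_pos hp] at h
    rcases h with h | h | h | h
    · exact ⟨-6, h, Or.inl ⟨hp, by norm_num⟩⟩
    · exact ⟨-3, h, Or.inl ⟨hp, by norm_num⟩⟩
    · exact ⟨-1, h, Or.inl ⟨hp, by norm_num⟩⟩
    · exact ⟨0, h, Or.inl ⟨hp, by norm_num⟩⟩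
  · rw [if_neg hp] at h
    rcases h with h | h | h | h
    · exact ⟨-9, h, Or.inr ⟨hp, by norm_num⟩⟩
    · exact ⟨-8, h, Or.inr ⟨hp, by norm_num⟩⟩
    · exact ⟨-6, h, Or.inr ⟨hp, by norm_num⟩⟩
    · exact ⟨-3, h, Or.inr ⟨hp, by norm_num⟩⟩

lemma mem_r1_intro {j : ZMod (2*t)} {a : ℤ} (h : a = -6 ∨ a = -5 ∨ a = -4 ∨ a = -3) :
    col t j a ∈ r1 t j := by
  rcases h with rfl | rfl | rfl | rfl
  · exact Or.inl rfl
  · exact Or.inr (Or.inl rfl)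
  · exact Or.inr (Or.inr (Or.inl rfl))
  · exact Or.inr (Or.inr (Or.inr rfl))

lemma mem_r0_even {j : ZMod (2*t)} (hp : pa t j = 0) {a : ℤ}
    (h : a = -6 ∨ a = -3 ∨ a = -1 ∨ a = 0) : col t j a ∈ r0 t j := by
  rw [r0, if_pos hp]
  rcases h with rfl | rfl | rfl | rfl
  · exact Or.inl rfl
  · exact Or.inr (Or.inl rfl)
  · exact Or.inr (Or.inr (Or.inl rfl))
  · exact Or.inr (Or.inr (Or.inr rfl))

lemma mem_r0_odd {j : ZMod (2*t)} (hp : ¬ pa t j = 0) {a : ℤ}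
    (h : a = -9 ∨ a = -8 ∨ a = -6 ∨ a = -3) : col t j a ∈ r0 t j := by
  rw [r0, if_neg hp]
  rcases h with rfl | rfl | rfl | rfl
  · exact Or.inl rfl
  · exact Or.inr (Or.inl rfl)
  · exact Or.inr (Or.inr (Or.inl rfl))
  · exact Or.inr (Or.inr (Or.inr rfl))


lemma conn_inner (ht : 1 ≤ t) (i : Fin t) (hi : ¬ (i : ℕ) = 0) (j : ZMod (2*t)) :
    ((segShallowVortexGrid (2*t)).induce (X t (i, j))).Connected := by
  have hrow : (i : ℕ) + 1 < 2*t := by have := i.isLt; omega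
  apply chain_conn (segShallowVortexGrid (2*t)) (X t (i,j))
    (fun k => ((gr t ht ((i:ℕ)+1)), col t j (-6 + (k:ℤ)))) 3
  · intro k hk
    rw [X_pos t hi]
    refine ⟨gr_val t ht hrow, mem_r1_intro t ?_⟩
    interval_cases k <;> norm_num
  · intro w hw
    rw [X_pos t hi] at hw
    obtain ⟨hr, hc⟩ := hw
    obtain ⟨a, hxa, ha⟩ := mem_r1_elim t hc
    rcases ha with rfl | rfl | rfl | rfl
    · exact ⟨0, by omega, Prod.ext_iff.mpr
        ⟨Fin.ext (by rw [gr_val t ht hrow]; omega), by rw [hxa]; norm_num⟩⟩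
    · exact ⟨1, by omega, Prod.ext_iff.mpr
        ⟨Fin.ext (by rw [gr_val t ht hrow]; omega), by rw [hxa]; norm_num⟩⟩
    · exact ⟨2, by omega, Prod.ext_iff.mpr
        ⟨Fin.ext (by rw [gr_val t ht hrow]; omega), by rw [hxa]; norm_num⟩⟩
    · exact ⟨3, by omega, Prod.ext_iff.mpr
        ⟨Fin.ext (by rw [gr_val t ht hrow]; omega), by rw [hxa]; norm_num⟩⟩
  · intro k hk
    interval_cases k <;> exact adj_colstep t ht _ j _ _ (by push_cast; try ring)

lemma conn_even (ht : 1 ≤ t) (i : Fin t) (hi : (i : ℕ) = 0) (j : ZMod (2*t))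
    (hp : pa t j = 0) :
    ((segShallowVortexGrid (2*t)).induce (X t (i, j))).Connected := by
  have h0 : (0:ℕ) < 2*t := by omega
  have h1 : (1:ℕ) < 2*t := by omega
  apply chain_conn (segShallowVortexGrid (2*t)) (X t (i,j))
    (fun k => match k with
      | 0 => (gr t ht 0, col t j (-6))
      | 1 => (gr t ht 1, col t j (-6))
      | 2 => (gr t ht 1, col t j (-5))
      | 3 => (gr t ht 1, col t j (-4))
      | 4 => (gr t ht 1, col t j (-3))
      | 5 => (gr t ht 0, col t j (-3))
      | 6 => (gr t ht 0, col t j (-1))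
      | _ => (gr t ht 0, col t j 0)) 7
  · intro k hk
    rw [X_zero t hi]
    interval_cases k
    · exact Or.inl ⟨gr_val t ht h0, mem_r0_even t hp (by norm_num)⟩
    · exact Or.inr ⟨gr_val t ht h1, mem_r1_intro t (by norm_num)⟩
    · exact Or.inr ⟨gr_val t ht h1, mem_r1_intro t (by norm_num)⟩
    · exact Or.inr ⟨gr_val t ht h1, mem_r1_intro t (by norm_num)⟩
    · exact Or.inr ⟨gr_val t ht h1, mem_r1_intro t (by norm_num)⟩
    · exact Or.inl ⟨gr_val t ht h0, mem_r0_even t hp (by norm_num)⟩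
    · exact Or.inl ⟨gr_val t ht h0, mem_r0_even t hp (by norm_num)⟩
    · exact Or.inl ⟨gr_val t ht h0, mem_r0_even t hp (by norm_num)⟩
  · intro w hw
    rw [X_zero t hi] at hw
    rcases hw with ⟨hr, hc⟩ | ⟨hr, hc⟩
    · obtain ⟨a, hxa, ha⟩ := mem_r0_elim t hc
      rcases ha with ⟨-, ha⟩ | ⟨hodd, -⟩
      · rcases ha with rfl | rfl | rfl | rfl
        · exact ⟨0, by omega, Prod.ext_iff.mpr
            ⟨Fin.ext ((gr_val t ht h0).trans hr.symm), hxa.symm⟩⟩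
        · exact ⟨5, by omega, Prod.ext_iff.mpr
            ⟨Fin.ext ((gr_val t ht h0).trans hr.symm), hxa.symm⟩⟩
        · exact ⟨6, by omega, Prod.ext_iff.mpr
            ⟨Fin.ext ((gr_val t ht h0).trans hr.symm), hxa.symm⟩⟩
        · exact ⟨7, by omega, Prod.ext_iff.mpr
            ⟨Fin.ext ((gr_val t ht h0).trans hr.symm), hxa.symm⟩⟩
      · exact absurd hp hodd
    · obtain ⟨a, hxa, ha⟩ := mem_r1_elim t hc
      rcases ha with rfl | rfl | rfl | rfl
      · exact ⟨1, by omega, Prod.ext_iff.mpr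
          ⟨Fin.ext ((gr_val t ht h1).trans hr.symm), hxa.symm⟩⟩
      · exact ⟨2, by omega, Prod.ext_iff.mpr
          ⟨Fin.ext ((gr_val t ht h1).trans hr.symm), hxa.symm⟩⟩
      · exact ⟨3, by omega, Prod.ext_iff.mpr
          ⟨Fin.ext ((gr_val t ht h1).trans hr.symm), hxa.symm⟩⟩
      · exact ⟨4, by omega, Prod.ext_iff.mpr
          ⟨Fin.ext ((gr_val t ht h1).trans hr.symm), hxa.symm⟩⟩
  · intro k hk
    interval_cases k
    · exact adj_vert t _ _ (by rw [gr_val t ht h0, gr_val t ht h1]) _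
    · exact adj_colstep t ht _ j _ _ (by norm_num)
    · exact adj_colstep t ht _ j _ _ (by norm_num)
    · exact adj_colstep t ht _ j _ _ (by norm_num)
    · exact (adj_vert t _ _ (by rw [gr_val t ht h0, gr_val t ht h1]) _).symm
    · exact adj_chord31 t ht j _ _ (gr_val t ht h0) (gr_val t ht h0)
    · exact adj_colstep t ht _ j _ _ (by norm_num)

lemma conn_odd (ht : 1 ≤ t) (i : Fin t) (hi : (i : ℕ) = 0) (j : ZMod (2*t))
    (hp : ¬ pa t j = 0) :
    ((segShallowVortexGrid (2*t)).induce (X t (i, j))).Connected := by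
  have h0 : (0:ℕ) < 2*t := by omega
  have h1 : (1:ℕ) < 2*t := by omega
  apply chain_conn (segShallowVortexGrid (2*t)) (X t (i,j))
    (fun k => match k with
      | 0 => (gr t ht 0, col t j (-9))
      | 1 => (gr t ht 0, col t j (-8))
      | 2 => (gr t ht 0, col t j (-6))
      | 3 => (gr t ht 1, col t j (-6))
      | 4 => (gr t ht 1, col t j (-5))
      | 5 => (gr t ht 1, col t j (-4))
      | 6 => (gr t ht 1, col t j (-3))
      | _ => (gr t ht 0, col t j (-3))) 7
  · intro k hk
    rw [X_zero t hi]
    interval_cases k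
    · exact Or.inl ⟨gr_val t ht h0, mem_r0_odd t hp (by norm_num)⟩
    · exact Or.inl ⟨gr_val t ht h0, mem_r0_odd t hp (by norm_num)⟩
    · exact Or.inl ⟨gr_val t ht h0, mem_r0_odd t hp (by norm_num)⟩
    · exact Or.inr ⟨gr_val t ht h1, mem_r1_intro t (by norm_num)⟩
    · exact Or.inr ⟨gr_val t ht h1, mem_r1_intro t (by norm_num)⟩
    · exact Or.inr ⟨gr_val t ht h1, mem_r1_intro t (by norm_num)⟩
    · exact Or.inr ⟨gr_val t ht h1, mem_r1_intro t (by norm_num)⟩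
    · exact Or.inl ⟨gr_val t ht h0, mem_r0_odd t hp (by norm_num)⟩
  · intro w hw
    rw [X_zero t hi] at hw
    rcases hw with ⟨hr, hc⟩ | ⟨hr, hc⟩
    · obtain ⟨a, hxa, ha⟩ := mem_r0_elim t hc
      rcases ha with ⟨heven, -⟩ | ⟨-, ha⟩
      · exact absurd heven hp
      · rcases ha with rfl | rfl | rfl | rfl
        · exact ⟨0, by omega, Prod.ext_iff.mpr
            ⟨Fin.ext ((gr_val t ht h0).trans hr.symm), hxa.symm⟩⟩
        · exact ⟨1, by omega, Prod.ext_iff.mpr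
            ⟨Fin.ext ((gr_val t ht h0).trans hr.symm), hxa.symm⟩⟩
        · exact ⟨2, by omega, Prod.ext_iff.mpr
            ⟨Fin.ext ((gr_val t ht h0).trans hr.symm), hxa.symm⟩⟩
        · exact ⟨7, by omega, Prod.ext_iff.mpr
            ⟨Fin.ext ((gr_val t ht h0).trans hr.symm), hxa.symm⟩⟩
    · obtain ⟨a, hxa, ha⟩ := mem_r1_elim t hc
      rcases ha with rfl | rfl | rfl | rfl
      · exact ⟨3, by omega, Prod.ext_iff.mpr
          ⟨Fin.ext ((gr_val t ht h1).trans hr.symm), hxa.symm⟩⟩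
      · exact ⟨4, by omega, Prod.ext_iff.mpr
          ⟨Fin.ext ((gr_val t ht h1).trans hr.symm), hxa.symm⟩⟩
      · exact ⟨5, by omega, Prod.ext_iff.mpr
          ⟨Fin.ext ((gr_val t ht h1).trans hr.symm), hxa.symm⟩⟩
      · exact ⟨6, by omega, Prod.ext_iff.mpr
          ⟨Fin.ext ((gr_val t ht h1).trans hr.symm), hxa.symm⟩⟩
  · intro k hk
    interval_cases k
    · exact adj_colstep t ht _ j _ _ (by norm_num)
    · exact adj_chord86 t ht j _ _ (gr_val t ht h0) (gr_val t ht h0)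
    · exact adj_vert t _ _ (by rw [gr_val t ht h0, gr_val t ht h1]) _
    · exact adj_colstep t ht _ j _ _ (by norm_num)
    · exact adj_colstep t ht _ j _ _ (by norm_num)
    · exact adj_colstep t ht _ j _ _ (by norm_num)
    · exact (adj_vert t _ _ (by rw [gr_val t ht h0, gr_val t ht h1]) _).symm


lemma r1_r1_absurd (ht : 1 ≤ t) {j j' : ZMod (2*t)} (hij : j ≠ j') {x : ZMod (4*(2*t))}
    (hc : x ∈ r1 t j) (hc' : x ∈ r1 t j') : False := by
  obtain ⟨a, hxa, ha⟩ := mem_r1_elim t hc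
  obtain ⟨a', hxa', ha'⟩ := mem_r1_elim t hc'
  obtain ⟨e, he, hj2, -⟩ := col_inj t ht (hxa.symm.trans hxa')
  rcases ha with rfl | rfl | rfl | rfl <;> rcases ha' with rfl | rfl | rfl | rfl <;>
    first
      | omega
      | (have he0 : e = 0 := by omega
         rw [he0] at hj2
         simp at hj2
         exact hij hj2)

lemma r0_r0_absurd (ht : 1 ≤ t) {j j' : ZMod (2*t)} (hij : j ≠ j') {x : ZMod (4*(2*t))}
    (hc : x ∈ r0 t j) (hc' : x ∈ r0 t j') : False := by
  obtain ⟨a, hxa, hA⟩ := mem_r0_elim t hc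
  obtain ⟨a', hxa', hA'⟩ := mem_r0_elim t hc'
  obtain ⟨e, he, hj2, hp2⟩ := col_inj t ht (hxa.symm.trans hxa')
  rcases hA with ⟨hpj, ha⟩ | ⟨hpj, ha⟩ <;> rcases hA' with ⟨hpj', ha'⟩ | ⟨hpj', ha'⟩ <;>
    rcases ha with rfl | rfl | rfl | rfl <;> rcases ha' with rfl | rfl | rfl | rfl <;>
    first
      | omega
      | (have he0 : e = 0 := by omega
         rw [he0] at hj2
         simp at hj2
         exact hij hj2)
      | (have h2 : (2:ℤ) ∣ e := by omega
         rw [(ZMod.intCast_zmod_eq_zero_iff_dvd e 2).mpr h2, add_zero] at hp2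
         first
           | exact hpj' (by rw [← hp2]; exact hpj)
           | exact hpj (by rw [hp2]; exact hpj'))

lemma X_disjoint (ht : 1 ≤ t) (u v : Fin t × ZMod (2*t)) (huv : u ≠ v) :
    Disjoint (X t u) (X t v) := by
  obtain ⟨i, j⟩ := u
  obtain ⟨i', j'⟩ := v
  rw [Set.disjoint_left]
  intro p hpu hpv
  by_cases hi : (i : ℕ) = 0
  · by_cases hi' : (i' : ℕ) = 0
    · have hij : j ≠ j' := by
        intro h
        exact huv (Prod.ext_iff.mpr ⟨Fin.ext (show (i:ℕ) = (i':ℕ) by omega), h⟩)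
      rw [X_zero t hi] at hpu
      rw [X_zero t hi'] at hpv
      rcases hpu with ⟨hr, hc⟩ | ⟨hr, hc⟩ <;> rcases hpv with ⟨hr', hc'⟩ | ⟨hr', hc'⟩
      · exact r0_r0_absurd t ht hij hc hc'
      · omega
      · omega
      · exact r1_r1_absurd t ht hij hc hc'
    · rw [X_zero t hi] at hpu
      rw [X_pos t hi'] at hpv
      obtain ⟨hr', -⟩ := hpv
      rcases hpu with ⟨hr, -⟩ | ⟨hr, -⟩ <;> omega
  · by_cases hi' : (i' : ℕ) = 0
    · rw [X_pos t hi] at hpu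
      rw [X_zero t hi'] at hpv
      obtain ⟨hr, -⟩ := hpu
      rcases hpv with ⟨hr', -⟩ | ⟨hr', -⟩ <;> omega
    · rw [X_pos t hi] at hpu
      rw [X_pos t hi'] at hpv
      obtain ⟨hr, hc⟩ := hpu
      obtain ⟨hr', hc'⟩ := hpv
      by_cases hii : (i : ℕ) = (i' : ℕ)
      · have hieq : i = i' := Fin.ext hii
        have hij : j ≠ j' := by
          intro h
          exact huv (Prod.ext_iff.mpr ⟨hieq, h⟩)
        exact r1_r1_absurd t ht hij hc hc'
      · omega

lemma pa_cases (x : ZMod 2) : x = 0 ∨ x = 1 := by revert x; decide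

lemma realize (ht : 1 ≤ t) (i : Fin t) (j : ZMod (2*t)) (i' : Fin t) (j' : ZMod (2*t))
    (h : (i = i' ∧ j' = j + 1) ∨ (j = j' ∧ (i' : ℕ) = (i : ℕ) + 1) ∨
         ((i : ℕ) = 0 ∧ (i' : ℕ) = 0 ∧ j' = j + 2)) :
    ∃ a ∈ X t (i, j), ∃ b ∈ X t (i', j'),
      (segShallowVortexGrid (2*t)).Adj a b := by
  have h2t0 : (0:ℕ) < 2*t := by omega
  rcases h with ⟨hii, rfl⟩ | ⟨rfl, hv⟩ | ⟨hi, hi', rfl⟩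
  · -- ring edge from (i,j) to (i,j+1)
    subst hii
    by_cases hi : (i : ℕ) = 0
    · by_cases hp : pa t j = 0
      · refine ⟨(gr t ht 0, col t j 0), ?_, (gr t ht 0, col t (j+1) (-3)), ?_, ?_⟩
        · rw [X_zero t hi]
          exact Or.inl ⟨gr_val t ht h2t0, mem_r0_even t hp (by norm_num)⟩
        · rw [X_zero t hi]
          have hp' : ¬ pa t (j+1) = 0 := by
            rw [map_add, map_one, hp, zero_add]
            decide
          exact Or.inl ⟨gr_val t ht h2t0, mem_r0_odd t hp' (by norm_num)⟩
        · rw [col_succ t ht]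
          exact adj_colstep t ht _ j _ _ (by norm_num)
      · refine ⟨(gr t ht 0, col t j (-3)), ?_, (gr t ht 0, col t (j+1) (-6)), ?_, ?_⟩
        · rw [X_zero t hi]
          exact Or.inl ⟨gr_val t ht h2t0, mem_r0_odd t hp (by norm_num)⟩
        · rw [X_zero t hi]
          have hp1 : pa t j = 1 := by
            rcases pa_cases (pa t j) with h | h
            · exact absurd h hp
            · exact h
          have hp' : pa t (j+1) = 0 := by
            rw [map_add, map_one, hp1]
            decide
          exact Or.inl ⟨gr_val t ht h2t0, mem_r0_even t hp' (by norm_num)⟩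
        · rw [col_succ t ht]
          exact adj_colstep t ht _ j _ _ (by norm_num)
    · have hrow : (i : ℕ) + 1 < 2*t := by have := i.isLt; omega
      refine ⟨(gr t ht ((i:ℕ)+1), col t j (-3)), ?_, (gr t ht ((i:ℕ)+1), col t (j+1) (-6)), ?_, ?_⟩
      · rw [X_pos t hi]
        exact ⟨gr_val t ht hrow, mem_r1_intro t (by norm_num)⟩
      · rw [X_pos t hi]
        exact ⟨gr_val t ht hrow, mem_r1_intro t (by norm_num)⟩
      · rw [col_succ t ht]
        exact adj_colstep t ht _ j _ _ (by norm_num)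
  · -- vertical edge
    by_cases hi : (i : ℕ) = 0
    · have hi'1 : (i' : ℕ) = 1 := by omega
      have h2t : 2 < 2*t := by have := i'.isLt; omega
      refine ⟨(gr t ht 1, col t j (-3)), ?_, (gr t ht 2, col t j (-3)), ?_, ?_⟩
      · rw [X_zero t hi]
        exact Or.inr ⟨gr_val t ht (by omega), mem_r1_intro t (by norm_num)⟩
      · rw [X_pos t (by omega : ¬ (i' : ℕ) = 0)]
        exact ⟨by rw [gr_val t ht h2t]; omega, mem_r1_intro t (by norm_num)⟩
      · exact adj_vert t _ _ (by rw [gr_val t ht h2t, gr_val t ht (by omega)]) _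
    · have hrow : (i : ℕ) + 2 < 2*t := by have := i'.isLt; omega
      refine ⟨(gr t ht ((i:ℕ)+1), col t j (-3)), ?_, (gr t ht ((i:ℕ)+2), col t j (-3)), ?_, ?_⟩
      · rw [X_pos t hi]
        exact ⟨gr_val t ht (by omega), mem_r1_intro t (by norm_num)⟩
      · rw [X_pos t (by omega : ¬ (i' : ℕ) = 0)]
        exact ⟨by rw [gr_val t ht hrow]; omega, mem_r1_intro t (by norm_num)⟩
      · exact adj_vert t _ _ (by rw [gr_val t ht hrow, gr_val t ht (by omega)]) _
  · -- chord edge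
    have h22 : (2 : ZMod 2) = 0 := by decide
    have hpp : pa t (j+2) = pa t j := by
      rw [map_add, map_ofNat, h22, add_zero]
    by_cases hp : pa t j = 0
    · refine ⟨(gr t ht 0, col t j 0), ?_, (gr t ht 0, col t (j+2) (-6)), ?_, ?_⟩
      · rw [X_zero t hi]
        exact Or.inl ⟨gr_val t ht h2t0, mem_r0_even t hp (by norm_num)⟩
      · rw [X_zero t hi']
        have hp2 : pa t (j+2) = 0 := by rw [hpp]; exact hp
        exact Or.inl ⟨gr_val t ht h2t0, mem_r0_even t hp2 (by norm_num)⟩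
      · have hc2 : col t (j+2) (-6) = col t j 2 := by
          have hjj : j + 2 = (j + 1) + 1 := by ring
          rw [hjj, col_succ t ht, col_succ t ht]
          norm_num
        rw [hc2]
        exact adj_chord02 t ht j _ _ (gr_val t ht h2t0) (gr_val t ht h2t0)
    · refine ⟨(gr t ht 0, col t j (-3)), ?_, (gr t ht 0, col t (j+2) (-9)), ?_, ?_⟩
      · rw [X_zero t hi]
        exact Or.inl ⟨gr_val t ht h2t0, mem_r0_odd t hp (by norm_num)⟩
      · rw [X_zero t hi']
        have hp2 : ¬ pa t (j+2) = 0 := by rw [hpp]; exact hp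
        exact Or.inl ⟨gr_val t ht h2t0, mem_r0_odd t hp2 (by norm_num)⟩
      · have hc2 : col t (j+2) (-9) = col t j (-1) := by
          have hjj : j + 2 = (j + 1) + 1 := by ring
          rw [hjj, col_succ t ht, col_succ t ht]
          norm_num
        rw [hc2]
        exact adj_chord31 t ht j _ _ (gr_val t ht h2t0) (gr_val t ht h2t0)

end SVGAux

/-- For every `t ≥ 1`, the shallow vortex grid `H_t` is a minor of the segregated
shallow vortex grid of order `2t`. -/
theorem shallowVortexGrid_isMinor_segShallowVortexGrid (t : ℕ) (ht : 1 ≤ t) :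
    IsMinorOf (shallowVortexGrid t) (segShallowVortexGrid (2 * t)) := by
  refine ⟨SVGAux.X t, fun v => ?_, fun u v huv => SVGAux.X_disjoint t ht u v huv,
    fun u v huv => ?_⟩
  · obtain ⟨i, j⟩ := v
    by_cases hi : (i : ℕ) = 0
    · by_cases hp : SVGAux.pa t j = 0
      · exact SVGAux.conn_even t ht i hi j hp
      · exact SVGAux.conn_odd t ht i hi j hp
    · exact SVGAux.conn_inner t ht i hi j
  · rw [shallowVortexGrid, SimpleGraph.fromRel_adj] at huv
    obtain ⟨-, h | h⟩ := huv
    · exact SVGAux.realize t ht u.1 u.2 v.1 v.2 h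
    · obtain ⟨a, ha, b, hb, hab⟩ := SVGAux.realize t ht v.1 v.2 u.1 u.2 h
      exact ⟨b, hb, a, ha, hab.symm⟩
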